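/- For any channel W from a finite set X to a finite set Y, any input distribution p, and any s ∈ (0,1), the inequality e^{ψ(s|W,p)} ≤ e^{φ(s|W,p)} holds, where e^{ψ(s|W,p)} = ∑_y (∑_x p(x) W_x(y)^{1+s}) W_p(y)^{−s} and e^{φ(s|W,p)} = ∑_y (∑_x p(x) W_x(y)^{1/(1−s)})^{1−s}. -/

import Mathlib

open Real Finset

/-- Comparison of the two exponents (Section IV): for any channel `W`, input
distribution `p`, and `s ∈ (0,1)`, `e^{ψ(s|W,p)} ≤ e^{φ(s|W,p)}`, i.e.
`∑_y (∑_x p(x) W_x(y)^{1+s}) W_p(y)^{−s} ≤ ∑_y (∑_x p(x) W_x(y)^{1/(1−s)})^{1−s}`. -/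
theorem exp_psi_le_exp_phi {X Y : Type*} [Fintype X] [Fintype Y]
    (W : X → Y → ℝ) (hW : ∀ x y, 0 ≤ W x y) (hW1 : ∀ x, ∑ y, W x y = 1)
    (p : X → ℝ) (hp : ∀ x, 0 ≤ p x) (hp1 : ∑ x, p x = 1)
    (s : ℝ) (hs0 : 0 < s) (hs1 : s < 1) :
    ∑ y, (∑ x, p x * W x y ^ (1 + s)) * (∑ x, p x * W x y) ^ (-s)
      ≤ ∑ y, (∑ x, p x * W x y ^ (1 / (1 - s))) ^ (1 - s) := by
  have h1s : (0:ℝ) < 1 - s := by linarith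
  apply Finset.sum_le_sum
  intro y _
  set A : ℝ := ∑ x, p x * W x y ^ (1 + s) with hA
  set B : ℝ := ∑ x, p x * W x y with hB
  set C : ℝ := ∑ x, p x * W x y ^ (1 / (1 - s)) with hC
  have hBnn : 0 ≤ B := Finset.sum_nonneg fun x _ => mul_nonneg (hp x) (hW x y)
  have hCnn : 0 ≤ C := Finset.sum_nonneg fun x _ =>
    mul_nonneg (hp x) (Real.rpow_nonneg (hW x y) _)
  have hRHS : 0 ≤ C ^ (1 - s) := Real.rpow_nonneg hCnn _
  rcases eq_or_lt_of_le hBnn with hB0 | hBpos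
  · -- B = 0: every term p x * W x y = 0, hence A = 0
    have hall := (Finset.sum_eq_zero_iff_of_nonneg
      (fun x (_ : x ∈ Finset.univ) => mul_nonneg (hp x) (hW x y))).mp hB0.symm
    have hA0 : A = 0 := by
      apply Finset.sum_eq_zero
      intro x hx
      rcases mul_eq_zero.mp (hall x hx) with h | h
      · simp [h]
      · rw [h, Real.zero_rpow (by positivity), mul_zero]
    rw [hA0, zero_mul]
    exact hRHS
  · -- B > 0: Hölder with exponents 1/(1-s), 1/s
    have hpq : Real.HolderConjugate (1 / (1 - s)) (1 / s) := by
      constructor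
      · rw [one_div, one_div, inv_inv, inv_inv, inv_one]; ring
      · positivity
      · positivity
    have holder := Real.inner_le_Lp_mul_Lq_of_nonneg (s := (Finset.univ : Finset X))
      hpq (f := fun x => p x ^ (1 - s) * W x y)
      (g := fun x => p x ^ s * W x y ^ s)
      (fun x _ => mul_nonneg (Real.rpow_nonneg (hp x) _) (hW x y))
      (fun x _ => mul_nonneg (Real.rpow_nonneg (hp x) _) (Real.rpow_nonneg (hW x y) _))
    have e1 : ∀ x : X, p x ^ (1 - s) * W x y * (p x ^ s * W x y ^ s)
        = p x * W x y ^ (1 + s) := by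
      intro x
      have hpa : p x ^ (1 - s) * p x ^ s = p x := by
        rw [← Real.rpow_add' (hp x) (by norm_num)]
        norm_num
      have hwa : W x y * W x y ^ s = W x y ^ (1 + s) := by
        rw [Real.rpow_add' (hW x y) (by positivity), Real.rpow_one]
      calc p x ^ (1 - s) * W x y * (p x ^ s * W x y ^ s)
          = (p x ^ (1 - s) * p x ^ s) * (W x y * W x y ^ s) := by ring
        _ = p x * W x y ^ (1 + s) := by rw [hpa, hwa]
    have e2 : ∀ x : X, (p x ^ (1 - s) * W x y) ^ (1 / (1 - s))
        = p x * W x y ^ (1 / (1 - s)) := by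
      intro x
      rw [Real.mul_rpow (Real.rpow_nonneg (hp x) _) (hW x y),
        ← Real.rpow_mul (hp x), mul_one_div, div_self h1s.ne', Real.rpow_one]
    have e3 : ∀ x : X, (p x ^ s * W x y ^ s) ^ (1 / s) = p x * W x y := by
      intro x
      rw [Real.mul_rpow (Real.rpow_nonneg (hp x) _) (Real.rpow_nonneg (hW x y) _),
        ← Real.rpow_mul (hp x), ← Real.rpow_mul (hW x y), mul_one_div,
        div_self hs0.ne', Real.rpow_one, Real.rpow_one]
    rw [Finset.sum_congr rfl (fun x _ => e1 x),
      Finset.sum_congr rfl (fun x _ => e2 x),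
      Finset.sum_congr rfl (fun x _ => e3 x),
      one_div_one_div, one_div_one_div] at holder
    have key : A ≤ C ^ (1 - s) * B ^ s := holder
    calc A * B ^ (-s) ≤ (C ^ (1 - s) * B ^ s) * B ^ (-s) :=
          mul_le_mul_of_nonneg_right key (Real.rpow_nonneg hBnn _)
      _ = C ^ (1 - s) := by
          rw [mul_assoc, ← Real.rpow_add hBpos]
          simp
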